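/- Let N be the 3×3 nilpotent Jordan block with ones on the superdiagonal. Every vector field of the form h = (x φ1, y φ1 + x φ2, z φ1 + y φ2 + φ3), where φ_i = φ_i(x, 2xz - y^2) are polynomials, lies in the kernel of ad_{N^*}. -/

import Mathlib

open MvPolynomial Matrix

noncomputable def Pnd (n d : ℕ) : Submodule ℝ (MvPolynomial (Fin n) ℝ) :=
  homogeneousSubmodule (Fin n) ℝ d

noncomputable def Fnd (n d : ℕ) : Submodule ℝ (Fin n → MvPolynomial (Fin n) ℝ) :=
  Submodule.pi Set.univ fun _ => homogeneousSubmodule (Fin n) ℝ d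

noncomputable def divL (n : ℕ) : (Fin n → MvPolynomial (Fin n) ℝ) →ₗ[ℝ] MvPolynomial (Fin n) ℝ :=
  ∑ i, (pderiv i).toLinearMap ∘ₗ LinearMap.proj i

noncomputable def adL {n : ℕ} (N : Matrix (Fin n) (Fin n) ℝ) :
    (Fin n → MvPolynomial (Fin n) ℝ) →ₗ[ℝ] (Fin n → MvPolynomial (Fin n) ℝ) :=
  LinearMap.pi fun i =>
    (∑ j, (LinearMap.mulLeft ℝ (∑ k, N j k • (X k : MvPolynomial (Fin n) ℝ))) ∘ₗ
        (pderiv j).toLinearMap ∘ₗ LinearMap.proj i)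
      - ∑ j, N i j • LinearMap.proj j

noncomputable def diffOp {n : ℕ} (m : Fin n →₀ ℕ) :
    Module.End ℝ (MvPolynomial (Fin n) ℝ) :=
  (List.finRange n).foldr
    (fun i f => (((pderiv i).toLinearMap : Module.End ℝ (MvPolynomial (Fin n) ℝ)) ^ (m i)) * f) 1

/-- Fischer inner product `⟨p,q⟩ = p(∂_ξ) q(ξ) |_{ξ=0}`. -/
noncomputable def fischer {n : ℕ} (p q : MvPolynomial (Fin n) ℝ) : ℝ :=
  constantCoeff (∑ m ∈ p.support, (fun m c => c • (diffOp m q)) m (coeff m p))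

noncomputable def fischerV {n : ℕ} (p q : Fin n → MvPolynomial (Fin n) ℝ) : ℝ :=
  ∑ i, fischer (p i) (q i)

noncomputable def radialL (n : ℕ) : MvPolynomial (Fin n) ℝ →ₗ[ℝ] (Fin n → MvPolynomial (Fin n) ℝ) :=
  LinearMap.pi fun i => LinearMap.mulLeft ℝ (X i)

noncomputable def Und (n d : ℕ) : Submodule ℝ (Fin n → MvPolynomial (Fin n) ℝ) :=
  Submodule.map (radialL n) (Pnd n (d - 1))

def N3 : Matrix (Fin 3) (Fin 3) ℝ := !![0,1,0; 0,0,1; 0,0,0]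

noncomputable def B3 : MvPolynomial (Fin 3) ℝ := 2 * X 0 * X 2 - X 1 ^ 2
lemma twoC : (2 : MvPolynomial (Fin 3) ℝ) = C 2 := (map_ofNat C 2).symm

lemma pB1 : pderiv 1 (B3) = -(2 * X 1) := by
  unfold B3; rw [twoC]
  simp only [map_sub, pderiv_mul, pderiv_C, pderiv_X_self,
    pderiv_X_of_ne (by decide : (0:Fin 3) ≠ 1),
    pderiv_X_of_ne (by decide : (2:Fin 3) ≠ 1)]
  rw [show ((X 1 : MvPolynomial (Fin 3) ℝ)^2) = X 1 * X 1 by ring, pderiv_mul, pderiv_X_self]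
  rw [← twoC]; ring

lemma pB2 : pderiv 2 (B3) = 2 * X 0 := by
  unfold B3; rw [twoC]
  simp only [map_sub, pderiv_mul, pderiv_C, pderiv_X_self,
    pderiv_X_of_ne (by decide : (0:Fin 3) ≠ 2)]
  rw [show ((X 1 : MvPolynomial (Fin 3) ℝ)^2) = X 1 * X 1 by ring, pderiv_mul,
    pderiv_X_of_ne (by decide : (1:Fin 3) ≠ 2)]
  rw [← twoC]; ring

lemma key (φ : MvPolynomial (Fin 2) ℝ) :
    X 0 * pderiv 1 (aeval ![X 0, B3] φ) + X 1 * pderiv 2 (aeval ![X 0, B3] φ) = 0 := by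
  induction φ using MvPolynomial.induction_on with
  | C a => simp
  | add p q hp hq =>
      simp only [map_add]
      rw [mul_add, mul_add]
      linear_combination hp + hq
  | mul_X p i hp =>
      rw [_root_.map_mul]
      fin_cases i
      · simp only [aeval_X, Fin.mk_zero, Matrix.cons_val_zero]
        rw [pderiv_mul, pderiv_mul,
          pderiv_X_of_ne (by decide : (0:Fin 3) ≠ 1),
          pderiv_X_of_ne (by decide : (0:Fin 3) ≠ 2)]
        linear_combination X 0 * hp
      · simp only [aeval_X, Fin.mk_one, Matrix.cons_val_one, Matrix.head_cons, Matrix.cons_val_zero]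
        rw [pderiv_mul, pderiv_mul, pB1, pB2]
        linear_combination B3 * hp

theorem elphick_form_in_kernel (φ1 φ2 φ3 : MvPolynomial (Fin 2) ℝ) :
    adL N3ᵀ
      ![X 0 * aeval ![X 0, B3] φ1,
        X 1 * aeval ![X 0, B3] φ1 + X 0 * aeval ![X 0, B3] φ2,
        X 2 * aeval ![X 0, B3] φ1 + X 1 * aeval ![X 0, B3] φ2 + aeval ![X 0, B3] φ3] = 0 := by
  funext i
  fin_cases i <;>
    simp [adL, N3, Fin.sum_univ_three, Matrix.transpose_apply] <;>
    simp only [← aeval_eq_bind₁]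
  · linear_combination X 0 * key φ1
  · linear_combination X 1 * key φ1 + X 0 * key φ2
  · linear_combination X 2 * key φ1 + X 1 * key φ2 + key φ3
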